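/- For a positive integer N, the congruence subgroup Γ₀(N) contains an element of order 6 if and only if the congruence a² − a + 1 ≡ 0 (mod N) has a solution; that is, there exists A ∈ Γ₀(N) with orderOf A = 6 if and only if there exists a ∈ ℤ/N with a² − a + 1 = 0. -/

import Mathlib

open Matrix MatrixGroups

private lemma mat_h2 (M : Matrix (Fin 2) (Fin 2) ℤ)
    (hdet : M 0 0 * M 1 1 - M 0 1 * M 1 0 = 1) :
    M * M = (M 0 0 + M 1 1) • M - 1 := by
  ext i j
  fin_cases i <;> fin_cases j <;>
    simp only [Matrix.mul_apply, Fin.sum_univ_two, Matrix.sub_apply, Matrix.smul_apply, Matrix.one_apply, smul_eq_mul] <;> norm_num <;>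
    first | ring1 | linear_combination hdet | linear_combination -hdet | linear_combination 2*hdet | linear_combination -2*hdet

private lemma mat_h3 (M : Matrix (Fin 2) (Fin 2) ℤ)
    (hdet : M 0 0 * M 1 1 - M 0 1 * M 1 0 = 1) :
    M * M * M = ((M 0 0 + M 1 1) * (M 0 0 + M 1 1) - 1) • M
      - (M 0 0 + M 1 1) • (1 : Matrix (Fin 2) (Fin 2) ℤ) := by
  set t := M 0 0 + M 1 1 with ht
  rw [mat_h2 M hdet, sub_mul, smul_mul_assoc, mat_h2 M hdet, smul_sub, smul_smul, one_mul]
  module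

private lemma mat_h6 (M : Matrix (Fin 2) (Fin 2) ℤ)
    (hdet : M 0 0 * M 1 1 - M 0 1 * M 1 0 = 1) :
    M ^ 6 = ((M 0 0 + M 1 1)^5 - 4*(M 0 0 + M 1 1)^3 + 3*(M 0 0 + M 1 1)) • M
      + (3*(M 0 0 + M 1 1)^2 - (M 0 0 + M 1 1)^4 - 1) • (1 : Matrix (Fin 2) (Fin 2) ℤ) := by
  set t := M 0 0 + M 1 1 with ht
  have h6 : M ^ 6 = (M * M * M) * (M * M * M) := by
    rw [show (6 : ℕ) = 3 + 3 from rfl, pow_add, pow_succ, pow_two]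
  rw [h6, mat_h3 M hdet, sub_mul, mul_sub, mul_sub,
    smul_mul_smul_comm, smul_mul_smul_comm, smul_mul_smul_comm, smul_mul_smul_comm,
    mat_h2 M hdet, one_mul, mul_one, mul_one, smul_sub, smul_smul]
  module

private lemma coe_det (A : Matrix.SpecialLinearGroup (Fin 2) ℤ) :
    (A : Matrix (Fin 2) (Fin 2) ℤ) 0 0 * (A : Matrix (Fin 2) (Fin 2) ℤ) 1 1
      - (A : Matrix (Fin 2) (Fin 2) ℤ) 0 1 * (A : Matrix (Fin 2) (Fin 2) ℤ) 1 0 = 1 := by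
  have := A.2
  rw [Matrix.det_fin_two] at this
  exact this

/-- If trace = 1 then order 6. -/
private lemma order_six_of_trace_one (A : Matrix.SpecialLinearGroup (Fin 2) ℤ)
    (ht : (A : Matrix (Fin 2) (Fin 2) ℤ) 0 0 + (A : Matrix (Fin 2) (Fin 2) ℤ) 1 1 = 1) :
    orderOf A = 6 := by
  set M := (A : Matrix (Fin 2) (Fin 2) ℤ) with hM
  have hdet := coe_det A
  have h3 : M * M * M = -1 := by
    rw [mat_h3 M hdet, ht]
    norm_num
  have h3' : (A : Matrix (Fin 2) (Fin 2) ℤ) ^ 3 = -1 := by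
    rw [pow_succ, pow_two]; exact h3
  have h6 : A ^ 6 = 1 := by
    apply Subtype.ext
    change (A : Matrix (Fin 2) (Fin 2) ℤ) ^ 6 = 1
    rw [show (6:ℕ) = 3 + 3 from rfl, pow_add, h3']
    norm_num
  have hdvd : orderOf A ∣ 6 := orderOf_dvd_of_pow_eq_one h6
  have hne3 : ¬ (orderOf A ∣ 3) := by
    intro h
    have : A ^ 3 = 1 := orderOf_dvd_iff_pow_eq_one.mp h
    have : (A : Matrix (Fin 2) (Fin 2) ℤ) ^ 3 = 1 := by
      exact congrArg (fun B : SL(2, ℤ) => (B : Matrix (Fin 2) (Fin 2) ℤ)) this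
    rw [h3'] at this
    have := congrFun (congrFun this 0) 0
    simp [Matrix.one_apply] at this
  have hne2 : ¬ (orderOf A ∣ 2) := by
    intro h
    have : A ^ 2 = 1 := orderOf_dvd_iff_pow_eq_one.mp h
    have h2' : (A : Matrix (Fin 2) (Fin 2) ℤ) ^ 2 = 1 := by
      exact congrArg (fun B : SL(2, ℤ) => (B : Matrix (Fin 2) (Fin 2) ℤ)) this
    rw [pow_two] at h2'
    rw [mat_h2 M hdet, ht, one_smul] at h2'
    -- M - 1 = 1
    have e00 := congrFun (congrFun h2' 0) 0
    have e11 := congrFun (congrFun h2' 1) 1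
    simp [Matrix.sub_apply, Matrix.one_apply] at e00 e11
    omega
  obtain ⟨n, hn⟩ : ∃ n, orderOf A = n := ⟨_, rfl⟩
  rw [hn] at hdvd hne2 hne3 ⊢
  have h1 : 1 ≤ n := Nat.pos_of_dvd_of_pos hdvd (by norm_num)
  have h6' : n ≤ 6 := Nat.le_of_dvd (by norm_num) hdvd
  interval_cases n <;> first | rfl | (exfalso; revert hdvd hne2 hne3; decide)

private lemma trace_one_of_order_six (A : Matrix.SpecialLinearGroup (Fin 2) ℤ)
    (h : orderOf A = 6) :
    (A : Matrix (Fin 2) (Fin 2) ℤ) 0 0 + (A : Matrix (Fin 2) (Fin 2) ℤ) 1 1 = 1 := by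
  set M := (A : Matrix (Fin 2) (Fin 2) ℤ) with hM
  have hdet := coe_det A
  set t : ℤ := M 0 0 + M 1 1 with ht
  have hA6 : A ^ 6 = 1 := by rw [← h]; exact pow_orderOf_eq_one A
  have hM6 : M ^ 6 = 1 := by
    rw [hM]; exact congrArg (fun B : SL(2, ℤ) => (B : Matrix (Fin 2) (Fin 2) ℤ)) hA6
  have h6 := mat_h6 M hdet
  rw [hM6, ← ht] at h6
  -- 1 = P • M + Q • 1
  set P : ℤ := t^5 - 4*t^3 + 3*t with hP
  set Q : ℤ := 3*t^2 - t^4 - 1 with hQ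
  have e01 : P * M 0 1 = 0 := by
    have hx := congrFun (congrFun h6 0) 1
    simp only [Matrix.add_apply, Matrix.smul_apply, Matrix.one_apply, smul_eq_mul] at hx
    norm_num at hx
    exact mul_eq_zero.mpr hx
  have e10 : P * M 1 0 = 0 := by
    have hx := congrFun (congrFun h6 1) 0
    simp only [Matrix.add_apply, Matrix.smul_apply, Matrix.one_apply, smul_eq_mul] at hx
    norm_num at hx
    exact mul_eq_zero.mpr hx
  have e00 : P * M 0 0 + Q = 1 := by
    have hx := congrFun (congrFun h6 0) 0
    simp only [Matrix.add_apply, Matrix.smul_apply, Matrix.one_apply, smul_eq_mul] at hx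
    norm_num at hx
    linarith [hx]
  have e11 : P * M 1 1 + Q = 1 := by
    have hx := congrFun (congrFun h6 1) 1
    simp only [Matrix.add_apply, Matrix.smul_apply, Matrix.one_apply, smul_eq_mul] at hx
    norm_num at hx
    linarith [hx]
  by_cases hPz : P = 0
  · -- t ∈ {0, 1, -1}
    have hfac : t * (t - 1) * ((t + 1) * (t * t - 3)) = 0 := by
      rw [← hPz, hP]; ring
    have htv : t = 0 ∨ t = 1 ∨ t = -1 := by
      rcases mul_eq_zero.mp hfac with h1 | h2
      · rcases mul_eq_zero.mp h1 with h1 | h1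
        · exact Or.inl h1
        · exact Or.inr (Or.inl (by omega))
      · rcases mul_eq_zero.mp h2 with h2 | h2
        · exact Or.inr (Or.inr (by omega))
        · exfalso
          have hb1 : t ≤ 1 := by nlinarith [sq_nonneg (t - 2)]
          have hb2 : -1 ≤ t := by nlinarith [sq_nonneg (t + 2)]
          interval_cases t <;> omega
    rcases htv with h0 | h1 | hm1
    · -- t = 0 : A^4 = 1, contradiction with order 6
      exfalso
      have h2 : M * M = -1 := by
        have := mat_h2 M hdet
        rw [← ht, h0, zero_smul, zero_sub] at this
        exact this
      have hA4 : A ^ 4 = 1 := by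
        apply Subtype.ext
        change (A : Matrix (Fin 2) (Fin 2) ℤ) ^ 4 = 1
        rw [show (4:ℕ) = 2 + 2 from rfl, pow_add, pow_two, ← hM, h2]
        norm_num
      have := orderOf_dvd_of_pow_eq_one hA4
      rw [h] at this
      revert this; decide
    · exact h1
    · -- t = -1 : A^3 = 1
      exfalso
      have h3 : M * M * M = 1 := by
        have := mat_h3 M hdet
        rw [← ht, hm1] at this
        rw [this]
        norm_num
      have hA3 : A ^ 3 = 1 := by
        apply Subtype.ext
        change (A : Matrix (Fin 2) (Fin 2) ℤ) ^ 3 = 1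
        rw [pow_succ, pow_two, ← hM, h3]
      have := orderOf_dvd_of_pow_eq_one hA3
      rw [h] at this
      revert this; decide
  · -- P ≠ 0 : A = ±1, order ≤ 2, contradiction
    exfalso
    have hb : M 0 1 = 0 := by
      rcases mul_eq_zero.mp e01 with h' | h'
      exacts [absurd h' hPz, h']
    have hc : M 1 0 = 0 := by
      rcases mul_eq_zero.mp e10 with h' | h'
      exacts [absurd h' hPz, h']
    have had : M 0 0 = M 1 1 := by
      have : P * M 0 0 = P * M 1 1 := by omega
      exact mul_left_cancel₀ hPz this
    have ha2 : M 0 0 * M 0 0 = 1 := by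
      have hd : M 0 0 * M 1 1 - M 0 1 * M 1 0 = 1 := hdet
      rw [hb, hc, ← had] at hd
      linarith [hd]
    have h2 : M * M = 1 := by
      ext i j
      fin_cases i <;> fin_cases j <;>
        simp [Matrix.mul_apply, Fin.sum_univ_two, Matrix.one_apply, hb, hc, ← had, ha2]
    have hA2 : A ^ 2 = 1 := by
      apply Subtype.ext
      change (A : Matrix (Fin 2) (Fin 2) ℤ) ^ 2 = 1
      rw [pow_two, ← hM, h2]
    have := orderOf_dvd_of_pow_eq_one hA2
    rw [h] at this
    revert this; decide

/-- Γ₀(N) contains an element of order 6 iff a² − a + 1 ≡ 0 (mod N) is solvable. -/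
theorem gamma0_order_six_iff (N : ℕ) (hN : 0 < N) :
    (∃ A ∈ CongruenceSubgroup.Gamma0 N, orderOf A = 6) ↔
      ∃ a : ZMod N, a ^ 2 - a + 1 = 0 := by
  haveI : NeZero N := ⟨hN.ne'⟩
  constructor
  · rintro ⟨A, hA0, h6⟩
    have ht := trace_one_of_order_six A h6
    have hdet := coe_det A
    have hc : (((A : Matrix (Fin 2) (Fin 2) ℤ) 1 0 : ℤ) : ZMod N) = 0 :=
      CongruenceSubgroup.Gamma0_mem.mp hA0
    refine ⟨(((A : Matrix (Fin 2) (Fin 2) ℤ) 0 0 : ℤ) : ZMod N), ?_⟩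
    have key : ((A : Matrix (Fin 2) (Fin 2) ℤ) 0 0 : ℤ)^2
        - (A : Matrix (Fin 2) (Fin 2) ℤ) 0 0 + 1
        = -((A : Matrix (Fin 2) (Fin 2) ℤ) 0 1 * (A : Matrix (Fin 2) (Fin 2) ℤ) 1 0) := by
      linear_combination -hdet + ((A : Matrix (Fin 2) (Fin 2) ℤ) 0 0) * ht
    have : ((((A : Matrix (Fin 2) (Fin 2) ℤ) 0 0)^2
        - (A : Matrix (Fin 2) (Fin 2) ℤ) 0 0 + 1 : ℤ) : ZMod N) = 0 := by
      rw [key]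
      push_cast
      rw [hc]
      ring
    push_cast at this
    convert this using 2
  · rintro ⟨x, hx⟩
    set a : ℤ := (x.val : ℤ) with ha
    have hax : ((a : ZMod N)) = x := by
      rw [ha]
      push_cast
      exact ZMod.natCast_rightInverse x
    have hdvd : (N : ℤ) ∣ a^2 - a + 1 := by
      rw [← ZMod.intCast_zmod_eq_zero_iff_dvd]
      push_cast
      rw [hax]
      exact hx
    obtain ⟨k, hk⟩ := hdvd
    have hdetm : Matrix.det !![a, -k; (N : ℤ), 1 - a] = 1 := by
      rw [Matrix.det_fin_two_of]
      linear_combination -hk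
    refine ⟨⟨!![a, -k; (N : ℤ), 1 - a], hdetm⟩, ?_, ?_⟩
    · refine CongruenceSubgroup.Gamma0_mem.mpr ?_
      show (((!![a, -k; (N : ℤ), 1 - a]) 1 0 : ℤ) : ZMod N) = 0
      simp
    · apply order_six_of_trace_one
      show (!![a, -k; (N : ℤ), 1 - a]) 0 0 + (!![a, -k; (N : ℤ), 1 - a]) 1 1 = 1
      simp
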